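/- Let (X,S) be a non-degenerate symmetric solution satisfying Property (C). Then any two frozen elements commute in M(X,S): if x₁y₁ and x₂y₂ are distinct frozen words, then x₁y₁x₂y₂ = x₂y₂x₁y₁ in M(X,S), and this common element is both the right lcm and the left lcm of the two frozen elements. -/

import Mathlib

/-- The defining relations of the structure monoid: `x y = g_x(y) f_y(x)`. -/
def structRel {X : Type*} (g f : X → X → X) :
    FreeMonoid X → FreeMonoid X → Prop :=
  fun a b => ∃ x y : X, a = FreeMonoid.of x * FreeMonoid.of y ∧
    b = FreeMonoid.of (g x y) * FreeMonoid.of (f y x)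

/-- `S` acting on the first two components of `X³`. -/
def S12 {X : Type*} (S : X × X → X × X) : X × X × X → X × X × X :=
  fun p => ((S (p.1, p.2.1)).1, (S (p.1, p.2.1)).2, p.2.2)

/-- `S` acting on the last two components of `X³`. -/
def S23 {X : Type*} (S : X × X → X × X) : X × X × X → X × X × X :=
  fun p => (p.1, (S (p.2.1, p.2.2)).1, (S (p.2.1, p.2.2)).2)

/-- The braid relation `S¹²S²³S¹² = S²³S¹²S²³`. -/
def Braided {X : Type*} (S : X × X → X × X) : Prop :=
  S12 S ∘ S23 S ∘ S12 S = S23 S ∘ S12 S ∘ S23 S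

/-- Property (C): for every frozen pair `(x,y)` (i.e. `S(x,y) = (x,y)`), one has
`g_x ∘ g_y = id` and `f_y ∘ f_x = id`. -/
def PropertyC {X : Type*} (S : X × X → X × X) (g f : X → X → X) : Prop :=
  ∀ x y : X, S (x, y) = (x, y) →
    (∀ z : X, g x (g y z) = z) ∧ (∀ z : X, f y (f x z) = z)

/-- `a` right-divides `b` (i.e. `b` is a left multiple of `a`). -/
def RDvd {M : Type*} [Monoid M] (a b : M) : Prop := ∃ c : M, b = c * a

/-- `c` is the right lcm of `a` and `b` (for left-divisibility). -/
def IsRightLcm {M : Type*} [Monoid M] (a b c : M) : Prop :=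
  a ∣ c ∧ b ∣ c ∧ ∀ d : M, a ∣ d → b ∣ d → c ∣ d

/-- `c` is the left lcm of `a` and `b` (for right-divisibility). -/
def IsLeftLcm {M : Type*} [Monoid M] (a b c : M) : Prop :=
  RDvd a c ∧ RDvd b c ∧ ∀ d : M, RDvd a d → RDvd b d → RDvd c d

namespace Stmt15Aux

/-- left-twisted monoid: multiset with a permutation acting on the right factor -/
@[ext] structure TL (X : Type*) where
  ms : Multiset X
  pm : X → X

instance {X : Type*} : One (TL X) := ⟨⟨0, id⟩⟩
instance {X : Type*} : Mul (TL X) := ⟨fun a b => ⟨a.ms + b.ms.map a.pm, a.pm ∘ b.pm⟩⟩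

@[simp] lemma TL.mul_ms {X : Type*} (a b : TL X) : (a * b).ms = a.ms + b.ms.map a.pm := rfl
@[simp] lemma TL.mul_pm {X : Type*} (a b : TL X) : (a * b).pm = a.pm ∘ b.pm := rfl
@[simp] lemma TL.one_ms {X : Type*} : (1 : TL X).ms = 0 := rfl
@[simp] lemma TL.one_pm {X : Type*} : (1 : TL X).pm = id := rfl

instance {X : Type*} : Monoid (TL X) where
  mul_assoc a b c := by
    ext1 <;> simp [Multiset.map_map, add_assoc, Function.comp_assoc]
  one_mul a := by ext1 <;> simp
  mul_one a := by ext1 <;> simp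

/-- right-twisted monoid -/
@[ext] structure TR (X : Type*) where
  ms : Multiset X
  pm : X → X

instance {X : Type*} : One (TR X) := ⟨⟨0, id⟩⟩
instance {X : Type*} : Mul (TR X) := ⟨fun a b => ⟨a.ms.map b.pm + b.ms, b.pm ∘ a.pm⟩⟩

@[simp] lemma TR.mul_ms {X : Type*} (a b : TR X) : (a * b).ms = a.ms.map b.pm + b.ms := rfl
@[simp] lemma TR.mul_pm {X : Type*} (a b : TR X) : (a * b).pm = b.pm ∘ a.pm := rfl
@[simp] lemma TR.one_ms {X : Type*} : (1 : TR X).ms = 0 := rfl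
@[simp] lemma TR.one_pm {X : Type*} : (1 : TR X).pm = id := rfl

instance {X : Type*} : Monoid (TR X) where
  mul_assoc a b c := by
    ext1 <;> simp [Multiset.map_map, add_assoc, Function.comp_assoc]
  one_mul a := by ext1 <;> simp
  mul_one a := by ext1 <;> simp

variable {X : Type*} (g f : X → X → X)

/-- the cocycle homomorphism on the free monoid, left version -/
def phiL : FreeMonoid X →* TL X := FreeMonoid.lift (fun x => ⟨{x}, g x⟩)

/-- the cocycle homomorphism on the free monoid, right version -/
def phiR : FreeMonoid X →* TR X := FreeMonoid.lift (fun x => ⟨{x}, f x⟩)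

@[simp] lemma phiL_of (x : X) : phiL g (.of x) = ⟨{x}, g x⟩ := FreeMonoid.lift_eval_of _ x
@[simp] lemma phiR_of (x : X) : phiR f (.of x) = ⟨{x}, f x⟩ := FreeMonoid.lift_eval_of _ x

/-- one-step relation soundness in the presented monoid -/
lemma mk_rel (x y : X) :
    PresentedMonoid.mk (structRel g f) (.of x * .of y) =
      PresentedMonoid.mk (structRel g f) (.of (g x y) * .of (f y x)) :=
  Quotient.sound (ConGen.Rel.of _ _ ⟨x, y, rfl, rfl⟩)

lemma phiL_rel (Hgg : ∀ x y z, g (g x y) (g (f y x) z) = g x (g y z))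
    (Hinv1 : ∀ x y, g (g x y) (f y x) = x) :
    ∀ a b, structRel g f a b → phiL g a = phiL g b := by
  rintro a b ⟨x, y, rfl, rfl⟩
  rw [map_mul, map_mul]
  ext1
  · simp only [phiL_of, TL.mul_ms]
    simp only [Multiset.map_singleton, Hinv1]
    exact Multiset.pair_comm x (g x y)
  · funext z
    simp only [phiL_of, TL.mul_pm]
    simp [Hgg]

lemma phiR_rel (Hff : ∀ x y z, f (f y x) (f (g x y) z) = f y (f x z))
    (Hinv2 : ∀ x y, f (f y x) (g x y) = y) :
    ∀ a b, structRel g f a b → phiR f a = phiR f b := by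
  rintro a b ⟨x, y, rfl, rfl⟩
  rw [map_mul, map_mul]
  ext1
  · simp only [phiR_of, TR.mul_ms]
    simp only [Multiset.map_singleton, Hinv2]
    exact Multiset.pair_comm (f y x) y
  · funext z
    simp only [phiR_of, TR.mul_pm]
    simp [Hff]

lemma phiL_congr (H : ∀ a b, structRel g f a b → phiL g a = phiL g b)
    {w w' : FreeMonoid X}
    (h : PresentedMonoid.mk (structRel g f) w = PresentedMonoid.mk (structRel g f) w') :
    phiL g w = phiL g w' := by
  have h' : conGen (structRel g f) w w' := Quotient.exact h
  clear h
  induction h' with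
  | of a b hab => exact H a b hab
  | refl => rfl
  | symm _ ih => exact ih.symm
  | trans _ _ ih1 ih2 => exact ih1.trans ih2
  | mul _ _ ih1 ih2 => rw [map_mul, map_mul, ih1, ih2]

lemma phiR_congr (H : ∀ a b, structRel g f a b → phiR f a = phiR f b)
    {w w' : FreeMonoid X}
    (h : PresentedMonoid.mk (structRel g f) w = PresentedMonoid.mk (structRel g f) w') :
    phiR f w = phiR f w' := by
  have h' : conGen (structRel g f) w w' := Quotient.exact h
  clear h
  induction h' with
  | of a b hab => exact H a b hab
  | refl => rfl
  | symm _ ih => exact ih.symm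
  | trans _ _ ih1 ih2 => exact ih1.trans ih2
  | mul _ _ ih1 ih2 => rw [map_mul, map_mul, ih1, ih2]

/-- extraction of a left divisor -/
lemma extract_left (w : FreeMonoid X) :
    ∀ x : X, x ∈ (phiL g w).ms →
    ∃ u : FreeMonoid X, w.length = u.length + 1 ∧
      PresentedMonoid.mk (structRel g f) w =
        PresentedMonoid.mk (structRel g f) (.of x) * PresentedMonoid.mk (structRel g f) u := by
  induction w using FreeMonoid.inductionOn' with
  | one => intro x hx; simp at hx
  | of_mul a v ih =>
    intro x hx
    rw [map_mul, phiL_of, TL.mul_ms] at hx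
    rcases Multiset.mem_add.mp hx with h1 | h2
    · rw [Multiset.mem_singleton] at h1
      subst h1
      exact ⟨v, by simp [FreeMonoid.length_mul, Nat.add_comm], by rw [map_mul]⟩
    · obtain ⟨z, hz, hgz⟩ := Multiset.mem_map.mp h2
      obtain ⟨u', hlen, heq⟩ := ih z hz
      refine ⟨.of (f z a) * u', ?_, ?_⟩
      · simp only [FreeMonoid.length_mul, FreeMonoid.length_of] at hlen ⊢
        omega
      · calc PresentedMonoid.mk (structRel g f) (.of a * v)
            = PresentedMonoid.mk (structRel g f) (.of a) *
              PresentedMonoid.mk (structRel g f) v := map_mul _ _ _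
          _ = PresentedMonoid.mk (structRel g f) (.of a) *
              (PresentedMonoid.mk (structRel g f) (.of z) *
                PresentedMonoid.mk (structRel g f) u') := by rw [heq]
          _ = PresentedMonoid.mk (structRel g f) (.of a * .of z) *
              PresentedMonoid.mk (structRel g f) u' := by rw [map_mul, mul_assoc]
          _ = PresentedMonoid.mk (structRel g f) (.of (g a z) * .of (f z a)) *
              PresentedMonoid.mk (structRel g f) u' := by rw [mk_rel]
          _ = PresentedMonoid.mk (structRel g f) (.of x) *
              (PresentedMonoid.mk (structRel g f) (.of (f z a)) *
                PresentedMonoid.mk (structRel g f) u') := by rw [← hgz, map_mul, mul_assoc]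
          _ = PresentedMonoid.mk (structRel g f) (.of x) *
              PresentedMonoid.mk (structRel g f) (.of (f z a) * u') := by rw [map_mul]

/-- extraction of a right divisor -/
lemma extract_right (w : FreeMonoid X) :
    ∀ y : X, y ∈ (phiR f w).ms →
    ∃ u : FreeMonoid X, w.length = u.length + 1 ∧
      PresentedMonoid.mk (structRel g f) w =
        PresentedMonoid.mk (structRel g f) u * PresentedMonoid.mk (structRel g f) (.of y) := by
  suffices H : ∀ (r : FreeMonoid X) (y : X), y ∈ (phiR f r.reverse).ms →
      ∃ u : FreeMonoid X, r.reverse.length = u.length + 1 ∧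
        PresentedMonoid.mk (structRel g f) r.reverse =
          PresentedMonoid.mk (structRel g f) u * PresentedMonoid.mk (structRel g f) (.of y) by
    intro y hy
    have := H w.reverse y (by rwa [FreeMonoid.reverse_reverse])
    rwa [FreeMonoid.reverse_reverse] at this
  intro r
  induction r using FreeMonoid.inductionOn' with
  | one =>
    intro y hy
    rw [show (FreeMonoid.reverse (1 : FreeMonoid X)) = 1 from rfl, map_one] at hy
    simp at hy
  | of_mul b r' ih =>
    intro y hy
    rw [FreeMonoid.reverse_mul, FreeMonoid.reverse_of, map_mul, phiR_of, TR.mul_ms] at hy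
    rcases Multiset.mem_add.mp hy with h2 | h1
    · obtain ⟨z, hz, hfz⟩ := Multiset.mem_map.mp h2
      obtain ⟨u', hlen, heq⟩ := ih z hz
      refine ⟨u' * .of (g z b), ?_, ?_⟩
      · simp only [FreeMonoid.reverse_mul, FreeMonoid.reverse_of, FreeMonoid.length_mul,
          FreeMonoid.length_of] at hlen ⊢
        omega
      · calc PresentedMonoid.mk (structRel g f) ((FreeMonoid.of b * r').reverse)
            = PresentedMonoid.mk (structRel g f) r'.reverse *
              PresentedMonoid.mk (structRel g f) (.of b) := by
                rw [FreeMonoid.reverse_mul, FreeMonoid.reverse_of, map_mul]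
          _ = PresentedMonoid.mk (structRel g f) u' *
              (PresentedMonoid.mk (structRel g f) (.of z) *
                PresentedMonoid.mk (structRel g f) (.of b)) := by rw [heq, mul_assoc]
          _ = PresentedMonoid.mk (structRel g f) u' *
              PresentedMonoid.mk (structRel g f) (.of z * .of b) := by rw [map_mul]
          _ = PresentedMonoid.mk (structRel g f) u' *
              PresentedMonoid.mk (structRel g f) (.of (g z b) * .of (f b z)) := by rw [mk_rel]
          _ = PresentedMonoid.mk (structRel g f) (u' * .of (g z b)) *
              PresentedMonoid.mk (structRel g f) (.of y) := by
                rw [← hfz, map_mul, map_mul, mul_assoc]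
    · rw [Multiset.mem_singleton] at h1
      subst h1
      refine ⟨r'.reverse, ?_, ?_⟩
      · simp [FreeMonoid.reverse_mul, FreeMonoid.length_mul]
      · rw [FreeMonoid.reverse_mul, FreeMonoid.reverse_of, map_mul]

variable {X : Type*} (g f : X → X → X)

lemma msL_theta {x y : X} (hfroz : g x y = x) (hCg : ∀ z, g x (g y z) = z)
    (u : FreeMonoid X) :
    (phiL g (.of x * .of y * u)).ms = x ::ₘ x ::ₘ (phiL g u).ms := by
  rw [map_mul, map_mul, phiL_of, phiL_of]
  simp only [TL.mul_ms, TL.mul_pm, Multiset.map_singleton, Multiset.map_map, hfroz]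
  simp only [Function.comp_def, hCg, Multiset.map_id']
  simp [Multiset.singleton_add, add_assoc]

lemma msR_theta {x y : X} (hfroz : f y x = y) (hCf : ∀ z, f y (f x z) = z)
    (u : FreeMonoid X) :
    (phiR f (u * (.of x * .of y))).ms = y ::ₘ y ::ₘ (phiR f u).ms := by
  rw [map_mul, map_mul, phiR_of, phiR_of]
  simp only [TR.mul_ms, TR.mul_pm, Multiset.map_singleton, Multiset.map_map, hfroz]
  simp only [Function.comp_def, hCf, Multiset.map_id']
  simp [Multiset.singleton_add]
  rw [add_comm]
  simp [Multiset.singleton_add]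

lemma extract2_left [DecidableEq X] {x y : X}
    (H : ∀ a b, structRel g f a b → phiL g a = phiL g b)
    (hginj : Function.Injective (g x)) (hfroz : g x y = x)
    (w : FreeMonoid X) (hcount : 2 ≤ Multiset.count x (phiL g w).ms) :
    ∃ u : FreeMonoid X, w.length = u.length + 2 ∧
      PresentedMonoid.mk (structRel g f) w =
        PresentedMonoid.mk (structRel g f) (.of x * .of y) *
          PresentedMonoid.mk (structRel g f) u := by
  have hx : x ∈ (phiL g w).ms := Multiset.count_pos.mp (by omega)
  obtain ⟨u₁, hl1, he1⟩ := extract_left g f w x hx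
  have hphi : phiL g w = phiL g (.of x * u₁) :=
    phiL_congr g f H (by rw [he1, map_mul])
  rw [hphi, map_mul, phiL_of, TL.mul_ms] at hcount
  dsimp only at hcount
  have hcnt2 : 0 < Multiset.count x (((phiL g u₁).ms).map (g x)) := by
    rw [Multiset.count_add, Multiset.count_singleton_self] at hcount
    omega
  obtain ⟨z, hz, hgz⟩ := Multiset.mem_map.mp (Multiset.count_pos.mp hcnt2)
  have hzy : z = y := hginj (by rw [hgz, hfroz])
  subst hzy
  obtain ⟨u, hl2, he2⟩ := extract_left g f u₁ z hz
  refine ⟨u, by rw [hl1, hl2], ?_⟩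
  rw [he1, he2, map_mul, mul_assoc]

lemma extract2_right [DecidableEq X] {x y : X}
    (H : ∀ a b, structRel g f a b → phiR f a = phiR f b)
    (hfinj : Function.Injective (f y)) (hfroz : f y x = y)
    (w : FreeMonoid X) (hcount : 2 ≤ Multiset.count y (phiR f w).ms) :
    ∃ u : FreeMonoid X, w.length = u.length + 2 ∧
      PresentedMonoid.mk (structRel g f) w =
        PresentedMonoid.mk (structRel g f) u *
          PresentedMonoid.mk (structRel g f) (.of x * .of y) := by
  have hy : y ∈ (phiR f w).ms := Multiset.count_pos.mp (by omega)
  obtain ⟨u₁, hl1, he1⟩ := extract_right g f w y hy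
  have hphi : phiR f w = phiR f (u₁ * .of y) :=
    phiR_congr g f H (by rw [he1, map_mul])
  rw [hphi, map_mul, phiR_of, TR.mul_ms] at hcount
  dsimp only at hcount
  have hcnt2 : 0 < Multiset.count y (((phiR f u₁).ms).map (f y)) := by
    rw [Multiset.count_add, Multiset.count_singleton_self] at hcount
    omega
  obtain ⟨z, hz, hfz⟩ := Multiset.mem_map.mp (Multiset.count_pos.mp hcnt2)
  have hzx : z = x := hfinj (by rw [hfz, hfroz])
  subst hzx
  obtain ⟨u, hl2, he2⟩ := extract_right g f u₁ z hz
  refine ⟨u, by rw [hl1, hl2], ?_⟩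
  rw [he1, he2, map_mul, mul_assoc]


end Stmt15Aux

open Stmt15Aux in
/-- under Property (C), two distinct frozen elements `x₁y₁` and `x₂y₂` commute
in `M(X,S)`, and their product is both their right lcm and their left lcm. -/
theorem stmt_15 {X : Type*} [Fintype X]
    (S : X × X → X × X) (g f : X → X → X)
    (hS : ∀ x y : X, S (x, y) = (g x y, f y x))
    (hg : ∀ x : X, Function.Bijective (g x))
    (hf : ∀ x : X, Function.Bijective (f x))
    (hinv : ∀ p : X × X, S (S p) = p)
    (hbr : Braided S)
    (hC : PropertyC S g f)
    (x₁ y₁ x₂ y₂ : X)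
    (h₁ : S (x₁, y₁) = (x₁, y₁)) (h₂ : S (x₂, y₂) = (x₂, y₂))
    (hne : (x₁, y₁) ≠ (x₂, y₂)) :
    letI θ₁ := PresentedMonoid.of (structRel g f) x₁ * PresentedMonoid.of (structRel g f) y₁
    letI θ₂ := PresentedMonoid.of (structRel g f) x₂ * PresentedMonoid.of (structRel g f) y₂
    θ₁ * θ₂ = θ₂ * θ₁ ∧ IsRightLcm θ₁ θ₂ (θ₁ * θ₂) ∧ IsLeftLcm θ₁ θ₂ (θ₁ * θ₂) := by
  classical
  -- frozen identities
  have e1 : (g x₁ y₁, f y₁ x₁) = (x₁, y₁) := (hS x₁ y₁).symm.trans h₁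
  have e2 : (g x₂ y₂, f y₂ x₂) = (x₂, y₂) := (hS x₂ y₂).symm.trans h₂
  rw [Prod.mk.injEq] at e1 e2
  obtain ⟨hfr1g, hfr1f⟩ := e1
  obtain ⟨hfr2g, hfr2f⟩ := e2
  obtain ⟨hC1g, hC1f⟩ := hC x₁ y₁ h₁
  obtain ⟨hC2g, hC2f⟩ := hC x₂ y₂ h₂
  -- involutivity identities
  have Hinv : ∀ x y : X, g (g x y) (f y x) = x ∧ f (f y x) (g x y) = y := by
    intro x y
    have h := hinv (x, y)
    rw [hS, hS] at h
    rwa [Prod.mk.injEq] at h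
  -- braid identities
  have Hbr : ∀ x y z : X,
      g (g x y) (g (f y x) z) = g x (g y z) ∧
      f z (f y x) = f (f z y) (f (g y z) x) := by
    intro x y z
    have h := congrFun hbr (x, y, z)
    simp only [Function.comp_apply, S12, S23, hS] at h
    rw [Prod.mk.injEq, Prod.mk.injEq] at h
    exact ⟨h.1, h.2.2⟩
  have Hgg : ∀ x y z, g (g x y) (g (f y x) z) = g x (g y z) := fun x y z => (Hbr x y z).1
  have Hff : ∀ x y z, f (f y x) (f (g x y) z) = f y (f x z) := fun x y z => (Hbr z x y).2.symm
  have HL := phiL_rel g f Hgg (fun x y => (Hinv x y).1)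
  have HR := phiR_rel g f Hff (fun x y => (Hinv x y).2)
  -- distinctness
  have hxx : x₁ ≠ x₂ := by
    intro h
    apply hne
    have hy : y₁ = y₂ := (hg x₁).injective (by rw [hfr1g, h, hfr2g])
    rw [h, hy]
  have hyy : y₁ ≠ y₂ := by
    intro h
    apply hne
    have hx : x₁ = x₂ := (hf y₁).injective (by rw [hfr1f, h, hfr2f])
    rw [h, hx]
  have hθ₁ : PresentedMonoid.of (structRel g f) x₁ * PresentedMonoid.of (structRel g f) y₁ =
      PresentedMonoid.mk (structRel g f) (.of x₁ * .of y₁) := (map_mul _ _ _).symm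
  have hθ₂ : PresentedMonoid.of (structRel g f) x₂ * PresentedMonoid.of (structRel g f) y₂ =
      PresentedMonoid.mk (structRel g f) (.of x₂ * .of y₂) := (map_mul _ _ _).symm
  -- commutation
  have hcomm : PresentedMonoid.mk (structRel g f) (.of x₁ * .of y₁) *
      PresentedMonoid.mk (structRel g f) (.of x₂ * .of y₂) =
      PresentedMonoid.mk (structRel g f) (.of x₂ * .of y₂) *
      PresentedMonoid.mk (structRel g f) (.of x₁ * .of y₁) := by
    have hms11 : (phiL g (.of x₁ * .of y₁)).ms = x₁ ::ₘ x₁ ::ₘ 0 := by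
      rw [map_mul, phiL_of, phiL_of]
      simp [hfr1g, Multiset.singleton_add]
    have hms21 : (phiL g (.of x₂ * .of y₂ * (.of x₁ * .of y₁))).ms
        = x₂ ::ₘ x₂ ::ₘ x₁ ::ₘ x₁ ::ₘ 0 := by
      rw [msL_theta g hfr2g hC2g, hms11]
    obtain ⟨u, hlu, hequ⟩ := extract2_left g f HL (hg x₁).injective hfr1g
      (.of x₂ * .of y₂ * (.of x₁ * .of y₁))
      (by rw [hms21]; simp [Multiset.count_cons_of_ne hxx, Multiset.count_cons_self, Multiset.count_singleton_self])
    have hphi : phiL g (.of x₂ * .of y₂ * (.of x₁ * .of y₁)) =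
        phiL g (.of x₁ * .of y₁ * u) := phiL_congr g f HL (by rw [map_mul]; exact hequ)
    have hmsu : (x₂ ::ₘ x₂ ::ₘ x₁ ::ₘ x₁ ::ₘ 0 : Multiset X) = x₁ ::ₘ x₁ ::ₘ (phiL g u).ms := by
      rw [← hms21, hphi, msL_theta g hfr1g hC1g]
    have hcnt : 2 ≤ Multiset.count x₂ (phiL g u).ms := by
      have := congrArg (Multiset.count x₂) hmsu
      simp [Multiset.count_cons_self, Multiset.count_cons_of_ne hxx.symm] at this
      omega
    obtain ⟨t, hlt, heqt⟩ := extract2_left g f HL (hg x₂).injective hfr2g u hcnt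
    have hlen4 : (FreeMonoid.of x₂ * FreeMonoid.of y₂ *
        (FreeMonoid.of x₁ * FreeMonoid.of y₁) : FreeMonoid X).length = 4 := by
      simp [FreeMonoid.length_mul, FreeMonoid.length_of]
    have htone : t = 1 := by
      rw [hlen4] at hlu
      have : t.length = 0 := by omega
      exact FreeMonoid.length_eq_zero.mp this
    rw [htone, map_one, mul_one] at heqt
    calc PresentedMonoid.mk (structRel g f) (.of x₁ * .of y₁) *
          PresentedMonoid.mk (structRel g f) (.of x₂ * .of y₂)
        = PresentedMonoid.mk (structRel g f) (.of x₁ * .of y₁) *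
          PresentedMonoid.mk (structRel g f) u := by rw [heqt]
      _ = PresentedMonoid.mk (structRel g f) (.of x₂ * .of y₂ * (.of x₁ * .of y₁)) := by
          rw [← hequ]
      _ = PresentedMonoid.mk (structRel g f) (.of x₂ * .of y₂) *
          PresentedMonoid.mk (structRel g f) (.of x₁ * .of y₁) := map_mul _ _ _
  rw [hθ₁, hθ₂]
  refine ⟨hcomm, ⟨⟨_, rfl⟩, ⟨_, hcomm⟩, ?_⟩, ⟨⟨_, hcomm⟩, ⟨_, rfl⟩, ?_⟩⟩
  · -- right lcm universality
    intro d hd1 hd2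
    obtain ⟨e₁, he₁⟩ := hd1
    obtain ⟨e₂, he₂⟩ := hd2
    obtain ⟨u, hu⟩ := PresentedMonoid.surjective_mk e₁
    obtain ⟨v, hv⟩ := PresentedMonoid.surjective_mk e₂
    have hdd : PresentedMonoid.mk (structRel g f) (.of x₁ * .of y₁ * u) =
        PresentedMonoid.mk (structRel g f) (.of x₂ * .of y₂ * v) := by
      rw [map_mul _ _ u, map_mul _ _ v, hu, hv, ← he₁, ← he₂]
    have hms := congrArg TL.ms (phiL_congr g f HL hdd)
    rw [msL_theta g hfr1g hC1g, msL_theta g hfr2g hC2g] at hms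
    have hcnt : 2 ≤ Multiset.count x₂ (phiL g u).ms := by
      have := congrArg (Multiset.count x₂) hms
      simp [Multiset.count_cons_self, Multiset.count_cons_of_ne hxx.symm] at this
      omega
    obtain ⟨t, hlt, heqt⟩ := extract2_left g f HL (hg x₂).injective hfr2g u hcnt
    refine ⟨PresentedMonoid.mk (structRel g f) t, ?_⟩
    rw [he₁, ← hu, heqt, ← mul_assoc]
  · -- left lcm universality
    intro d hd1 hd2
    obtain ⟨c₁, hc₁⟩ := hd1
    obtain ⟨c₂, hc₂⟩ := hd2
    obtain ⟨u, hu⟩ := PresentedMonoid.surjective_mk c₁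
    obtain ⟨v, hv⟩ := PresentedMonoid.surjective_mk c₂
    have hdd : PresentedMonoid.mk (structRel g f) (u * (.of x₁ * .of y₁)) =
        PresentedMonoid.mk (structRel g f) (v * (.of x₂ * .of y₂)) := by
      rw [map_mul _ u _, map_mul _ v _, hu, hv, ← hc₁, ← hc₂]
    have hms := congrArg TR.ms (phiR_congr g f HR hdd)
    rw [msR_theta f hfr1f hC1f, msR_theta f hfr2f hC2f] at hms
    have hcnt : 2 ≤ Multiset.count y₂ (phiR f u).ms := by
      have := congrArg (Multiset.count y₂) hms
      simp [Multiset.count_cons_self, Multiset.count_cons_of_ne hyy.symm] at this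
      omega
    obtain ⟨t, hlt, heqt⟩ := extract2_right g f HR (hf y₂).injective hfr2f u hcnt
    refine ⟨PresentedMonoid.mk (structRel g f) t, ?_⟩
    rw [hc₁, ← hu, heqt, mul_assoc, ← hcomm]
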